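/- arXiv:1605.01677 — 3 statements merged into one kernel-verified Lean document; each statement's English description precedes it below -/
import Mathlib

section
/- Let 0 < μ₂ < μ < 1 and set C₁(μ, μ₂) = (μ − μ₂)²/(2μ(1 − μ₂)). Then for any μ₃ with 0 ≤ μ₃ ≤ μ₂, the Bernoulli KL divergence satisfies d(μ₃, μ) − d(μ₃, μ₂) ≥ C₁(μ, μ₂) > 0. -/
noncomputable def klBer (p q : ℝ) : ℝ :=
  p * Real.log (p / q) + (1 - p) * Real.log ((1 - p) / (1 - q))

/-- Upper bound: for `1 ≤ y`, `log y ≤ (y - y⁻¹)/2`. -/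
lemma log_le_half_sub_inv {y : ℝ} (hy : 1 ≤ y) : Real.log y ≤ (y - y⁻¹) / 2 := by
  have hy0 : 0 < y := lt_of_lt_of_le one_pos hy
  have h1 : 0 ≤ Real.log y := Real.log_nonneg hy
  have h2 : Real.log y ≤ Real.sinh (Real.log y) := Real.self_le_sinh_iff.mpr h1
  rwa [Real.sinh_log hy0] at h2

/-- Lower bound: for `0 ≤ t < 1`, `t + t²/2 ≤ -log (1 - t)`. -/
lemma quad_le_neg_log {t : ℝ} (h0 : 0 ≤ t) (h1 : t < 1) :
    t + t ^ 2 / 2 ≤ -Real.log (1 - t) := by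
  have key : ∀ x ∈ Set.Ico (0 : ℝ) 1, Real.log (1 - x) + x + x ^ 2 / 2 ≤ 0 := by
    intro x hx
    obtain ⟨hx0, hx1⟩ := hx
    have hd : ∀ s : ℝ, 1 - s > 0 → HasDerivAt (fun s : ℝ => Real.log (1 - s) + s + s ^ 2 / 2)
        ((1 - s)⁻¹ * (-1) + 1 + s) s := by
      intro s hs1
      have h := ((Real.hasDerivAt_log (ne_of_gt hs1)).comp s
          ((hasDerivAt_id s).const_sub 1))
      exact ((h.add (hasDerivAt_id s)).add
        ((hasDerivAt_pow 2 s).div_const 2)).congr_deriv (by norm_num)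
    have hmono : AntitoneOn (fun s : ℝ => Real.log (1 - s) + s + s ^ 2 / 2)
        (Set.Icc (0 : ℝ) x) := by
      apply antitoneOn_of_deriv_nonpos (convex_Icc 0 x)
      · have hc : ContinuousOn (fun s : ℝ => Real.log (1 - s)) (Set.Icc (0:ℝ) x) :=
          ContinuousOn.log ((continuous_const.sub continuous_id).continuousOn)
            (fun s hs => by simp only [Set.mem_Icc] at hs; intro h; nlinarith [hs.2])
        exact (hc.add continuous_id.continuousOn).add
          ((continuous_pow 2).continuousOn.div_const 2)
      · intro s hs
        rw [interior_Icc, Set.mem_Ioo] at hs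
        exact (hd s (by nlinarith [hs.2])).differentiableAt.differentiableWithinAt
      · intro s hs
        rw [interior_Icc, Set.mem_Ioo] at hs
        have hs1 : 1 - s > 0 := by nlinarith [hs.2]
        rw [(hd s hs1).deriv]
        have : (1 - s)⁻¹ * (-1) + 1 + s = -(s ^ 2) / (1 - s) := by
          field_simp; ring
        rw [this]
        exact div_nonpos_of_nonpos_of_nonneg (neg_nonpos.mpr (sq_nonneg s)) (le_of_lt hs1)
    have := hmono (Set.left_mem_Icc.mpr hx0) (Set.right_mem_Icc.mpr hx0) hx0
    simpa using this
  have := key t ⟨h0, h1⟩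
  linarith

/-- The core bound at `μ₃ = μ₂`: `klBer μ₂ μ ≥ (μ-μ₂)²/(2μ(1-μ₂))`. -/
lemma klBer_core (μ μ₂ : ℝ) (h0 : 0 < μ₂) (h12 : μ₂ < μ) (h1 : μ < 1) :
    (μ - μ₂) ^ 2 / (2 * μ * (1 - μ₂)) ≤ klBer μ₂ μ := by
  have hμ0 : 0 < μ := lt_trans h0 h12
  have h1μ : 0 < 1 - μ := by linarith
  have h1μ₂ : 0 < 1 - μ₂ := by linarith
  -- term 1
  have hy : (1:ℝ) ≤ μ / μ₂ := (one_le_div h0).mpr (le_of_lt h12)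
  have t1 : -((μ ^ 2 - μ₂ ^ 2) / (2 * μ)) ≤ μ₂ * Real.log (μ₂ / μ) := by
    have hlog : Real.log (μ / μ₂) ≤ (μ / μ₂ - (μ / μ₂)⁻¹) / 2 := log_le_half_sub_inv hy
    have hrw : Real.log (μ₂ / μ) = -Real.log (μ / μ₂) := by
      rw [← Real.log_inv]; congr 1; field_simp
    rw [hrw]
    have hinv : (μ / μ₂)⁻¹ = μ₂ / μ := by field_simp
    rw [hinv] at hlog
    have := mul_le_mul_of_nonneg_left hlog (le_of_lt h0)
    have heq : μ₂ * ((μ / μ₂ - μ₂ / μ) / 2) = (μ ^ 2 - μ₂ ^ 2) / (2 * μ) := by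
      field_simp
    nlinarith
  -- term 2
  set t : ℝ := (μ - μ₂) / (1 - μ₂) with ht
  have ht0 : 0 ≤ t := div_nonneg (by linarith) (le_of_lt h1μ₂)
  have ht1 : t < 1 := (div_lt_one h1μ₂).mpr (by linarith)
  have t2 : (μ - μ₂) + (μ - μ₂) ^ 2 / (2 * (1 - μ₂)) ≤
      (1 - μ₂) * Real.log ((1 - μ₂) / (1 - μ)) := by
    have hq := quad_le_neg_log ht0 ht1
    have hrw : (1:ℝ) - t = (1 - μ) / (1 - μ₂) := by
      rw [ht]; field_simp; ring
    rw [hrw] at hq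
    have hlogr : Real.log ((1 - μ) / (1 - μ₂)) = -Real.log ((1 - μ₂) / (1 - μ)) := by
      rw [← Real.log_inv]; congr 1; field_simp
    rw [hlogr, neg_neg] at hq
    have := mul_le_mul_of_nonneg_left hq (le_of_lt h1μ₂)
    have heq : (1 - μ₂) * (t + t ^ 2 / 2) =
        (μ - μ₂) + (μ - μ₂) ^ 2 / (2 * (1 - μ₂)) := by
      rw [ht]; field_simp
    linarith [heq ▸ this]
  have hsum : (μ - μ₂) ^ 2 / (2 * μ) + (μ - μ₂) ^ 2 / (2 * (1 - μ₂)) ≤ klBer μ₂ μ := by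
    unfold klBer
    have : -((μ ^ 2 - μ₂ ^ 2) / (2 * μ)) + ((μ - μ₂) + (μ - μ₂) ^ 2 / (2 * (1 - μ₂)))
        = (μ - μ₂) ^ 2 / (2 * μ) + (μ - μ₂) ^ 2 / (2 * (1 - μ₂)) := by
      field_simp; ring
    linarith
  have hfin : (μ - μ₂) ^ 2 / (2 * μ * (1 - μ₂)) ≤
      (μ - μ₂) ^ 2 / (2 * μ) + (μ - μ₂) ^ 2 / (2 * (1 - μ₂)) := by
    rw [div_add_div _ _ (by positivity) (by positivity), div_le_div_iff₀ (by positivity) (by positivity)]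
    nlinarith [mul_nonneg (mul_nonneg (mul_nonneg hμ0.le h1μ₂.le) (sq_nonneg (μ - μ₂))) (sub_nonneg.mpr h12.le)]
  linarith

/-- Lemma 13 of Honda–Takemura: for `0 < μ₂ < μ < 1` and any `μ₃ ≤ μ₂`,
`d(μ₃, μ) − d(μ₃, μ₂) ≥ C₁(μ, μ₂) > 0` where
`C₁(μ, μ₂) = (μ − μ₂)² / (2 μ (1 − μ₂))`. -/
theorem klBer_diff_ge (μ μ₂ μ₃ : ℝ) (h0 : 0 < μ₂) (h12 : μ₂ < μ) (h1 : μ < 1)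
    (h30 : 0 ≤ μ₃) (h32 : μ₃ ≤ μ₂) :
    (μ - μ₂) ^ 2 / (2 * μ * (1 - μ₂)) ≤ klBer μ₃ μ - klBer μ₃ μ₂ ∧
      0 < (μ - μ₂) ^ 2 / (2 * μ * (1 - μ₂)) := by
  have hμ0 : 0 < μ := lt_trans h0 h12
  have h1μ : 0 < 1 - μ := by linarith
  have h1μ₂ : 0 < 1 - μ₂ := by linarith
  have h1μ₃ : 0 < 1 - μ₃ := by linarith
  constructor
  · -- diff at μ₃ expressed linearly
    have hdiff : ∀ p : ℝ, 0 ≤ p → p < 1 → klBer p μ - klBer p μ₂ =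
        p * (Real.log μ₂ - Real.log μ) +
        (1 - p) * (Real.log (1 - μ₂) - Real.log (1 - μ)) := by
      intro p hp0 hp1
      unfold klBer
      have h2 : Real.log ((1 - p) / (1 - μ)) = Real.log (1 - p) - Real.log (1 - μ) :=
        Real.log_div (by linarith) (ne_of_gt h1μ)
      have h3 : Real.log ((1 - p) / (1 - μ₂)) = Real.log (1 - p) - Real.log (1 - μ₂) :=
        Real.log_div (by linarith) (ne_of_gt h1μ₂)
      rcases eq_or_lt_of_le hp0 with h | h
      · simp [← h, h2, h3]; ring
      · have h4 : Real.log (p / μ) = Real.log p - Real.log μ :=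
          Real.log_div (ne_of_gt h) (ne_of_gt hμ0)
        have h5 : Real.log (p / μ₂) = Real.log p - Real.log μ₂ :=
          Real.log_div (ne_of_gt h) (ne_of_gt h0)
        rw [h2, h3, h4, h5]; ring
    have e3 := hdiff μ₃ h30 (by linarith)
    have e2 := hdiff μ₂ (le_of_lt h0) (by linarith)
    -- monotone in μ₃
    have hlog1 : Real.log μ₂ - Real.log μ ≤ 0 := by
      have := Real.log_le_log h0 (le_of_lt h12); linarith
    have hlog2 : 0 ≤ Real.log (1 - μ₂) - Real.log (1 - μ) := by
      have := Real.log_le_log h1μ (by linarith : 1 - μ ≤ 1 - μ₂); linarith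
    have hmono : klBer μ₂ μ - klBer μ₂ μ₂ ≤ klBer μ₃ μ - klBer μ₃ μ₂ := by
      rw [e3, e2]
      nlinarith [mul_nonneg (sub_nonneg.mpr h32)
        (sub_nonneg.mpr (Real.log_le_log h0 (le_of_lt h12)))]
    have hzero : klBer μ₂ μ₂ = 0 := by
      unfold klBer
      rw [div_self (ne_of_gt h0), div_self (ne_of_gt h1μ₂), Real.log_one]; ring
    have := klBer_core μ μ₂ h0 h12 h1
    rw [hzero] at hmono
    linarith
  · exact div_pos (pow_pos (sub_pos.mpr h12) 2) (by positivity)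
end

section
/- Consider the linear program: minimize ∑_{j=1}^{n} c_j y_j over y ∈ [0,∞)ⁿ subject to ∑_{j ∈ S} y_j ≥ 1 for every S ⊆ {1,…,n} with |S| = n − k, where 0 < k < n and the costs satisfy 0 ≤ c₁ ≤ c₂ ≤ ⋯ ≤ c_n. Then there exists an integer h with k < h ≤ n such that the vector y* defined by y*_j = 1/(h − k) for j ≤ h and y*_j = 0 for j > h is an optimal solution, i.e., it is feasible and achieves the infimum of the objective over the feasible set. -/
open Finset

/-- Cardinality of a `Fin n` filter equals the corresponding `range n` filter. -/
private lemma card_filter_fin (n : ℕ) (p : ℕ → Prop) [DecidablePred p] :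
    (Finset.univ.filter (fun j : Fin n => p (j : ℕ))).card
      = ((Finset.range n).filter p).card := by
  rw [← Finset.card_image_of_injective _ Fin.val_injective]
  congr 1
  ext x
  simp only [Finset.mem_image, Finset.mem_filter, Finset.mem_univ, true_and,
    Finset.mem_range]
  constructor
  · rintro ⟨j, hj, rfl⟩; exact ⟨j.isLt, hj⟩
  · rintro ⟨hx, hx2⟩; exact ⟨⟨x, hx⟩, hx2, rfl⟩

/-- Sum over a `Fin n` filter equals a sum over the corresponding `ℕ` filter. -/
private lemma sum_filter_fin (n : ℕ) (p : ℕ → Prop) [DecidablePred p]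
    (f : ℕ → ℝ) :
    (∑ j ∈ Finset.univ.filter (fun j : Fin n => p (j : ℕ)), f (j : ℕ))
      = ∑ j ∈ (Finset.range n).filter p, f j := by
  rw [Finset.sum_filter, Finset.sum_filter,
    ← Fin.sum_univ_eq_sum_range (fun j => if p j then f j else 0) n]

/-- The key lower bound: if `w` is nonnegative and nonincreasing with tail sum
`∑_{j ≥ k} w j ≥ 1`, and `m ≥ 0` satisfies `m * (h - k) ≤ ∑_{j < h} c j` for all
`k < h ≤ n`, then `m ≤ ∑ c j * w j`. -/
private lemma lemA (n k : ℕ) (hkn : k < n) (c : Fin n → ℝ) (hc0 : ∀ j, 0 ≤ c j)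
    (m : ℝ) (hm0 : 0 ≤ m)
    (hmC : ∀ h, k < h → h ≤ n →
      m * ((h : ℝ) - (k : ℝ)) ≤ ∑ j ∈ Finset.univ.filter (fun j : Fin n => (j : ℕ) < h), c j)
    (w : Fin n → ℝ) (hw0 : ∀ j, 0 ≤ w j) (hwa : Antitone w)
    (htail : 1 ≤ ∑ j ∈ Finset.univ.filter (fun j : Fin n => k ≤ (j : ℕ)), w j) :
    m ≤ ∑ j, c j * w j := by
  classical
  set A : ℕ → ℝ := fun j => if hj : j < n then c ⟨j, hj⟩ else 0 with hAdef
  set V : ℕ → ℝ := fun j => if hj : j < n then w ⟨j, hj⟩ else 0 with hVdef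
  have hA0 : ∀ j, 0 ≤ A j := by
    intro j; simp only [hAdef]; split
    · exact hc0 _
    · exact le_refl 0
  have hV0 : ∀ j, 0 ≤ V j := by
    intro j; simp only [hVdef]; split
    · exact hw0 _
    · exact le_refl 0
  have hVanti : ∀ i j : ℕ, i ≤ j → V j ≤ V i := by
    intro i j hij
    by_cases hj : j < n
    · have hi : i < n := lt_of_le_of_lt hij hj
      simp only [hVdef, dif_pos hj, dif_pos hi]
      exact hwa (show (⟨i, hi⟩ : Fin n) ≤ ⟨j, hj⟩ from hij)
    · simp only [hVdef, dif_neg hj]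
      exact hV0 i
  set t : ℕ → ℝ := fun h => V h - V (h + 1) with htdef
  have ht0 : ∀ h, 0 ≤ t h := fun h => sub_nonneg.mpr (hVanti h (h + 1) (Nat.le_succ h))
  have hVn : V n = 0 := by simp [hVdef]
  have htel : ∀ j, j ≤ n → V j = ∑ h ∈ Finset.Ico j n, t h := by
    intro j hj
    rw [Finset.sum_Ico_eq_sum_range]
    have heq : ∑ i ∈ Finset.range (n - j), t (j + i)
        = ∑ i ∈ Finset.range (n - j),
            ((fun i => V (j + i)) i - (fun i => V (j + i)) (i + 1)) := by
      refine Finset.sum_congr rfl fun i _ => ?_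
      rfl
    rw [heq, Finset.sum_range_sub']
    rw [Nat.add_zero, Nat.add_sub_cancel' hj, hVn, sub_zero]
  -- Abel summation for the objective
  have step1 : ∑ j ∈ Finset.range n, A j * V j
      = ∑ h ∈ Finset.range n, (∑ j ∈ Finset.range (h + 1), A j) * t h := by
    have h1 : ∀ j ∈ Finset.range n, A j * V j = ∑ h ∈ Finset.Ico j n, A j * t h := by
      intro j hj
      rw [htel j (le_of_lt (Finset.mem_range.mp hj)), Finset.mul_sum]
    rw [Finset.sum_congr rfl h1, Finset.range_eq_Ico, Finset.sum_Ico_Ico_comm]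
    refine Finset.sum_congr rfl fun h _ => ?_
    rw [Finset.sum_mul, Finset.range_eq_Ico]
  -- Abel summation for the tail sum
  have step2 : ∑ j ∈ Finset.Ico k n, V j
      = ∑ h ∈ Finset.Ico k n, ((h + 1 - k : ℕ) : ℝ) * t h := by
    have h1 : ∀ j ∈ Finset.Ico j n ∪ ∅, True := fun _ _ => trivial
    have h2 : ∀ j ∈ Finset.Ico k n, V j = ∑ h ∈ Finset.Ico j n, t h := by
      intro j hj
      exact htel j (le_of_lt (Finset.mem_Ico.mp hj).2)
    rw [Finset.sum_congr rfl h2, Finset.sum_Ico_Ico_comm]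
    refine Finset.sum_congr rfl fun h _ => ?_
    rw [Finset.sum_const, Nat.card_Ico, nsmul_eq_mul]
  -- bridges between Fin-sums and ℕ-sums
  have bridge1 : ∑ j, c j * w j = ∑ j ∈ Finset.range n, A j * V j := by
    rw [← Fin.sum_univ_eq_sum_range (fun j => A j * V j) n]
    refine Finset.sum_congr rfl fun j _ => ?_
    simp [hAdef, hVdef, j.isLt]
  have bridge2 : ∑ j ∈ Finset.univ.filter (fun j : Fin n => k ≤ (j : ℕ)), w j
      = ∑ j ∈ Finset.Ico k n, V j := by
    have h1 : ∀ j ∈ Finset.univ.filter (fun j : Fin n => k ≤ (j : ℕ)), w j = V (j : ℕ) := by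
      intro j _
      simp [hVdef, j.isLt]
    rw [Finset.sum_congr rfl h1, sum_filter_fin n (fun j => k ≤ j) V]
    congr 1
    ext x
    simp only [Finset.mem_filter, Finset.mem_range, Finset.mem_Ico]
    omega
  have bridgeC : ∀ hh, hh ≤ n → (∑ j ∈ Finset.range hh, A j)
      = ∑ j ∈ Finset.univ.filter (fun j : Fin n => (j : ℕ) < hh), c j := by
    intro hh hhn
    have h1 : ∀ j ∈ Finset.univ.filter (fun j : Fin n => (j : ℕ) < hh),
        c j = A (j : ℕ) := by
      intro j _
      simp [hAdef, j.isLt]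
    rw [Finset.sum_congr rfl h1, sum_filter_fin n (fun j => j < hh) A]
    congr 1
    ext x
    simp only [Finset.mem_filter, Finset.mem_range]
    omega
  -- the chain of inequalities
  have htail' : 1 ≤ ∑ j ∈ Finset.Ico k n, V j := by rwa [bridge2] at htail
  have key1 : m ≤ m * ∑ j ∈ Finset.Ico k n, V j := by
    nlinarith [htail', hm0]
  have key2 : m * ∑ j ∈ Finset.Ico k n, V j
      ≤ ∑ h ∈ Finset.Ico k n, (∑ j ∈ Finset.range (h + 1), A j) * t h := by
    rw [step2, Finset.mul_sum]
    refine Finset.sum_le_sum fun h hh => ?_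
    obtain ⟨hk, hn⟩ := Finset.mem_Ico.mp hh
    have hcast : ((h + 1 - k : ℕ) : ℝ) = ((h + 1 : ℕ) : ℝ) - (k : ℝ) := by
      have : k ≤ h + 1 := by omega
      push_cast [Nat.cast_sub this]
      ring
    have hC := hmC (h + 1) (by omega) (by omega)
    rw [bridgeC (h + 1) (by omega)] at *
    rw [← mul_assoc, hcast]
    exact mul_le_mul_of_nonneg_right (by exact_mod_cast hC) (ht0 h)
  have key3 : ∑ h ∈ Finset.Ico k n, (∑ j ∈ Finset.range (h + 1), A j) * t h
      ≤ ∑ h ∈ Finset.range n, (∑ j ∈ Finset.range (h + 1), A j) * t h := by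
    refine Finset.sum_le_sum_of_subset_of_nonneg ?_ fun h _ _ => ?_
    · rw [Finset.range_eq_Ico]
      exact Finset.Ico_subset_Ico (Nat.zero_le k) le_rfl
    · exact mul_nonneg (Finset.sum_nonneg fun j _ => hA0 j) (ht0 h)
  calc m ≤ m * ∑ j ∈ Finset.Ico k n, V j := key1
    _ ≤ ∑ h ∈ Finset.Ico k n, (∑ j ∈ Finset.range (h + 1), A j) * t h := key2
    _ ≤ ∑ h ∈ Finset.range n, (∑ j ∈ Finset.range (h + 1), A j) * t h := key3
    _ = ∑ j ∈ Finset.range n, A j * V j := step1.symm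
    _ = ∑ j, c j * w j := bridge1.symm

/-- The subset-sum constrained LP `min ∑ c_j y_j` subject to
`∑_{j ∈ S} y_j ≥ 1` for all size-`(n−k)` subsets `S`, with nondecreasing
nonnegative costs, has an optimal solution of the form
`y* = (1/(h−k), …, 1/(h−k), 0, …, 0)` for some `k < h ≤ n`. -/
theorem exists_block_optimal_solution (n k : ℕ) (hk0 : 0 < k) (hkn : k < n)
    (c : Fin n → ℝ) (hc0 : ∀ j, 0 ≤ c j) (hcmono : ∀ i j : Fin n, i ≤ j → c i ≤ c j) :
    ∃ h : ℕ, k < h ∧ h ≤ n ∧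
      (let ystar : Fin n → ℝ := fun j => if (j : ℕ) < h then 1 / (h - k : ℝ) else 0
       ((∀ j, 0 ≤ ystar j) ∧
        (∀ S : Finset (Fin n), S.card = n - k → 1 ≤ ∑ j ∈ S, ystar j)) ∧
       ∀ y : Fin n → ℝ, (∀ j, 0 ≤ y j) →
         (∀ S : Finset (Fin n), S.card = n - k → 1 ≤ ∑ j ∈ S, y j) →
         ∑ j, c j * ystar j ≤ ∑ j, c j * y j) := by
  classical
  have hne : (Finset.Ioc k n).Nonempty := ⟨n, Finset.mem_Ioc.mpr ⟨hkn, le_rfl⟩⟩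
  obtain ⟨h, hhmem, hmin⟩ := Finset.exists_min_image (Finset.Ioc k n)
    (fun h => (∑ j ∈ Finset.univ.filter (fun j : Fin n => (j : ℕ) < h), c j)
        / ((h : ℝ) - (k : ℝ))) hne
  obtain ⟨hkh, hhn⟩ := Finset.mem_Ioc.mp hhmem
  refine ⟨h, hkh, hhn, ?_⟩
  have hd0 : (0 : ℝ) < (h : ℝ) - (k : ℝ) := by
    have : (k : ℝ) < (h : ℝ) := by exact_mod_cast hkh
    linarith
  set C : ℝ := ∑ j ∈ Finset.univ.filter (fun j : Fin n => (j : ℕ) < h), c j with hCdef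
  have hC0 : 0 ≤ C := Finset.sum_nonneg fun j _ => hc0 j
  set m : ℝ := C / ((h : ℝ) - (k : ℝ)) with hmdef
  have hm0 : 0 ≤ m := div_nonneg hC0 hd0.le
  constructor
  · constructor
    · intro j
      dsimp only
      split
      · positivity
      · exact le_rfl
    · -- feasibility
      intro S hS
      dsimp only
      rw [← Finset.sum_filter, Finset.sum_const, nsmul_eq_mul]
      have hcardnot : (Finset.univ.filter (fun j : Fin n => ¬ (j : ℕ) < h)).card = n - h := by
        rw [card_filter_fin n (fun j => ¬ j < h)]
        have : (Finset.range n).filter (fun j => ¬ j < h) = Finset.Ico h n := by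
          ext x
          simp only [Finset.mem_filter, Finset.mem_range, Finset.mem_Ico]
          omega
        rw [this, Nat.card_Ico]
      have hsplit := Finset.card_filter_add_card_filter_not
        (s := S) (p := fun j : Fin n => (j : ℕ) < h)
      have hle : (S.filter (fun j : Fin n => ¬ (j : ℕ) < h)).card
          ≤ n - h := by
        rw [← hcardnot]
        exact Finset.card_le_card (Finset.filter_subset_filter _ (Finset.subset_univ S))
      have hcard : h - k ≤ (S.filter (fun j : Fin n => (j : ℕ) < h)).card := by omega
      have hcast : (h : ℝ) - (k : ℝ) ≤ ((S.filter (fun j : Fin n => (j : ℕ) < h)).card : ℝ) := by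
        have h1 : ((h - k : ℕ) : ℝ) = (h : ℝ) - (k : ℝ) := by
          push_cast [Nat.cast_sub hkh.le]; ring
        rw [← h1]
        exact_mod_cast hcard
      rw [mul_one_div, le_div_iff₀ hd0, one_mul]
      exact hcast
  · -- optimality
    intro y hy0 hyfeas
    dsimp only
    have hobj : ∑ j, c j * (if (j : ℕ) < h then 1 / ((h : ℝ) - (k : ℝ)) else 0) = m := by
      have h1 : ∀ j : Fin n, c j * (if (j : ℕ) < h then 1 / ((h : ℝ) - (k : ℝ)) else 0)
          = if (j : ℕ) < h then c j * (1 / ((h : ℝ) - (k : ℝ))) else 0 := by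
        intro j; split <;> simp
      rw [Finset.sum_congr rfl fun j _ => h1 j, ← Finset.sum_filter, ← Finset.sum_mul,
        ← hCdef, mul_one_div, hmdef]
    rw [hobj]
    -- sort y in decreasing order
    set σ := Tuple.sort y with hσdef
    set τ : Equiv.Perm (Fin n) := Fin.revPerm.trans σ with hτdef
    set w : Fin n → ℝ := fun j => y (τ j) with hwdef
    have hτapp : ∀ j, τ j = σ j.rev := fun j => rfl
    have hwa : Antitone w := by
      intro i j hij
      simp only [hwdef, hτapp]
      exact Tuple.monotone_sort y (Fin.rev_le_rev.mpr hij)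
    have hw0 : ∀ j, 0 ≤ w j := fun j => hy0 _
    -- tail constraint for w
    set T := Finset.univ.filter (fun j : Fin n => k ≤ (j : ℕ)) with hTdef
    have hTcard : T.card = n - k := by
      rw [hTdef, card_filter_fin n (fun j => k ≤ j)]
      have : (Finset.range n).filter (fun j => k ≤ j) = Finset.Ico k n := by
        ext x
        simp only [Finset.mem_filter, Finset.mem_range, Finset.mem_Ico]
        omega
      rw [this, Nat.card_Ico]
    have hScard : (T.image (fun j => τ j)).card = n - k := by
      rw [Finset.card_image_of_injective _ τ.injective, hTcard]
    have htail : 1 ≤ ∑ j ∈ T, w j := by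
      have h1 := hyfeas (T.image (fun j => τ j)) hScard
      rwa [Finset.sum_image (fun a _ b _ hab => τ.injective hab)] at h1
    -- rearrangement inequality
    have hav : Antivary c w := by
      intro i j hij
      rcases le_total j i with hle | hle
      · exact hcmono j i hle
      · exact absurd (hwa hle) (not_le.mpr hij)
    have hre : ∑ i, c i * w i ≤ ∑ i, c i * y i := by
      have h1 := hav.sum_smul_le_sum_smul_comp_perm (σ := τ⁻¹)
      simp only [smul_eq_mul] at h1
      have h2 : ∀ i : Fin n, w (τ⁻¹ i) = y i := by
        intro i
        simp [hwdef, Equiv.Perm.inv_def, Equiv.apply_symm_apply]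
      calc ∑ i, c i * w i ≤ ∑ i, c i * w (τ⁻¹ i) := h1
        _ = ∑ i, c i * y i := by
            refine Finset.sum_congr rfl fun i _ => ?_
            rw [h2]
    -- lower bound via lemA
    have hmC : ∀ h', k < h' → h' ≤ n →
        m * ((h' : ℝ) - (k : ℝ))
          ≤ ∑ j ∈ Finset.univ.filter (fun j : Fin n => (j : ℕ) < h'), c j := by
      intro h' hk' hn'
      have hd' : (0 : ℝ) < (h' : ℝ) - (k : ℝ) := by
        have : (k : ℝ) < (h' : ℝ) := by exact_mod_cast hk'
        linarith
      rw [← le_div_iff₀ hd'] at *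
      exact hmin h' (Finset.mem_Ioc.mpr ⟨hk', hn'⟩)
    have hlow := lemA n k hkn c hc0 m hm0 hmC w hw0 hwa (by rwa [← hTdef])
    exact le_trans hlow hre
end

section
/- Let X₁,…,Xₙ be i.i.d. Bernoulli(μ) random variables with μ ∈ (0,1), and let X̄ = (1/n)∑Xᵢ. Then for any ε > 0 with μ + ε ≤ 1, P(X̄ ≥ μ + ε) ≤ exp(−n·d(μ+ε, μ)), where d is the Bernoulli KL divergence. -/
open ProbabilityTheory MeasureTheory Real

lemma bern_exp_eq {Ω : Type*} (X : Ω → ℝ) (hval : ∀ ω, X ω = 0 ∨ X ω = 1) (t : ℝ) :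
    (fun ω => Real.exp (t * X ω)) =
      fun ω => Set.indicator {ω | X ω = 1} (fun _ => Real.exp t - 1) ω + 1 := by
  funext ω
  rcases hval ω with h | h <;> simp [h, Set.indicator_apply]

lemma bern_integrable {Ω : Type*} [MeasurableSpace Ω] (P : Measure Ω)
    [IsProbabilityMeasure P] (X : Ω → ℝ) (hm : Measurable X)
    (hval : ∀ ω, X ω = 0 ∨ X ω = 1) (t : ℝ) :
    Integrable (fun ω => Real.exp (t * X ω)) P := by
  rw [bern_exp_eq X hval t]
  have hs : MeasurableSet {ω | X ω = 1} := hm (measurableSet_singleton 1)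
  exact ((integrable_const _).indicator hs).add (integrable_const 1)

lemma bern_mgf {Ω : Type*} [MeasurableSpace Ω] (P : Measure Ω)
    [IsProbabilityMeasure P] (X : Ω → ℝ) (hm : Measurable X)
    (hval : ∀ ω, X ω = 0 ∨ X ω = 1) (μ : ℝ) (hμ0 : 0 ≤ μ)
    (hber : P {ω | X ω = 1} = ENNReal.ofReal μ) (t : ℝ) :
    mgf X P t = μ * Real.exp t + (1 - μ) := by
  have hs : MeasurableSet {ω | X ω = 1} := hm (measurableSet_singleton 1)
  rw [mgf, bern_exp_eq X hval t]
  rw [integral_add (((integrable_const _).indicator hs)) (integrable_const 1)]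
  rw [integral_indicator_const _ hs, measureReal_def, hber, integral_const]
  simp [ENNReal.toReal_ofReal hμ0]
  ring

/-- Chernoff bound for i.i.d. Bernoulli(μ) random variables:
`P(X̄ ≥ μ + ε) ≤ exp(−n d(μ+ε, μ))`. -/
theorem chernoff_bernoulli (n : ℕ) (hn : 0 < n)
    {Ω : Type*} [MeasurableSpace Ω] (P : Measure Ω) [IsProbabilityMeasure P]
    (X : Fin n → Ω → ℝ) (hmeas : ∀ i, Measurable (X i))
    (hindep : iIndepFun X P)
    (hval : ∀ i ω, X i ω = 0 ∨ X i ω = 1)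
    (μ : ℝ) (hμ : μ ∈ Set.Ioo (0 : ℝ) 1)
    (hber : ∀ i, P {ω | X i ω = 1} = ENNReal.ofReal μ)
    (ε : ℝ) (hε : 0 < ε) (hε1 : μ + ε ≤ 1) :
    P {ω | μ + ε ≤ (∑ i, X i ω) / n} ≤
      ENNReal.ofReal (Real.exp (-(n : ℝ) * klBer (μ + ε) μ)) := by
  obtain ⟨hμ0, hμ1⟩ := hμ
  have hn0 : (0:ℝ) < n := by exact_mod_cast hn
  have ha0 : 0 < μ + ε := by linarith
  have hEvent : {ω | μ + ε ≤ (∑ i, X i ω) / n} = {ω | (μ + ε) * n ≤ ∑ i, X i ω} := by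
    ext ω; simp only [Set.mem_setOf_eq, le_div_iff₀ hn0]
  rw [hEvent]
  rcases lt_or_eq_of_le hε1 with ha1 | ha1
  · -- case μ + ε < 1
    set a := μ + ε with hadef
    have h1a : 0 < 1 - a := by linarith
    have h1μ : 0 < 1 - μ := by linarith
    set t := Real.log (a * (1 - μ) / ((1 - a) * μ)) with htdef
    have hargpos : 0 < a * (1 - μ) / ((1 - a) * μ) := by positivity
    have harg : 1 ≤ a * (1 - μ) / ((1 - a) * μ) := by
      rw [le_div_iff₀ (by positivity)]
      nlinarith
    have ht0 : 0 ≤ t := Real.log_nonneg harg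
    have hexpt : Real.exp t = a * (1 - μ) / ((1 - a) * μ) := Real.exp_log hargpos
    have hint : Integrable (fun ω => Real.exp (t * (∑ i, X i) ω)) P :=
      hindep.integrable_exp_mul_sum hmeas
        (fun i _ => bern_integrable P (X i) (hmeas i) (hval i) t)
    have hb := measure_ge_le_exp_mul_mgf (X := ∑ i, X i) (μ := P) ((μ + ε) * n) ht0 hint
    have hset : {ω | (μ + ε) * n ≤ ∑ i, X i ω} = {ω | (μ + ε) * n ≤ (∑ i, X i) ω} := by
      ext ω; simp [Finset.sum_apply]
    have hmgf : mgf (∑ i, X i) P t = (μ * Real.exp t + (1 - μ)) ^ n := by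
      rw [hindep.mgf_sum hmeas]
      rw [Finset.prod_congr rfl fun i _ =>
        bern_mgf P (X i) (hmeas i) (hval i) μ hμ0.le (hber i) t]
      simp
    have hval2 : μ * Real.exp t + (1 - μ) = (1 - μ) / (1 - a) := by
      rw [hexpt]; field_simp; ring
    have hbound : Real.exp (-t * ((μ + ε) * n)) * mgf (∑ i, X i) P t =
        Real.exp (-(n : ℝ) * klBer (μ + ε) μ) := by
      rw [hmgf, hval2]
      have h2 : ((1 - μ) / (1 - a)) ^ n = Real.exp ((n : ℝ) * Real.log ((1 - μ) / (1 - a))) := by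
        rw [Real.exp_nat_mul, Real.exp_log (by positivity)]
      rw [h2, ← Real.exp_add]
      congr 1
      have ht_eq : t = Real.log a - Real.log μ + (Real.log (1 - μ) - Real.log (1 - a)) := by
        rw [htdef, Real.log_div (by positivity) (by positivity),
          Real.log_mul (by positivity) (by positivity),
          Real.log_mul (by positivity) (by positivity)]
        ring
      have hL : Real.log ((1 - μ) / (1 - a)) = Real.log (1 - μ) - Real.log (1 - a) :=
        Real.log_div (by positivity) (by positivity)
      have hkl : klBer (μ + ε) μ =
          a * (Real.log a - Real.log μ) +
            (1 - a) * (Real.log (1 - a) - Real.log (1 - μ)) := by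
        rw [klBer, ← hadef, Real.log_div (by positivity) (by positivity),
          Real.log_div (by positivity) (by positivity)]
      rw [ht_eq, hL, hkl]
      ring
    rw [hset]
    refine (ENNReal.le_ofReal_iff_toReal_le (measure_ne_top P _) (Real.exp_nonneg _)).mpr ?_
    calc (P {ω | (μ + ε) * n ≤ (∑ i, X i) ω}).toReal
        ≤ Real.exp (-t * ((μ + ε) * n)) * mgf (∑ i, X i) P t := hb
      _ = Real.exp (-(n : ℝ) * klBer (μ + ε) μ) := hbound
  · -- case μ + ε = 1
    have hsub : {ω | (μ + ε) * n ≤ ∑ i, X i ω} ⊆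
        ⋂ i ∈ Finset.univ, X i ⁻¹' ({1} : Set ℝ) := by
      intro ω hω
      simp only [Set.mem_iInter, Set.mem_preimage, Set.mem_singleton_iff, Finset.mem_univ,
        forall_true_left]
      intro i
      by_contra hXi
      have hXi0 : X i ω = 0 := (hval i ω).resolve_right hXi
      have hlt : ∑ j, X j ω < ∑ _j : Fin n, (1:ℝ) := by
        refine Finset.sum_lt_sum (fun j _ => ?_) ⟨i, Finset.mem_univ i, by rw [hXi0]; norm_num⟩
        rcases hval j ω with h | h <;> simp [h]
      simp only [Finset.sum_const, Finset.card_univ, Fintype.card_fin, nsmul_eq_mul,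
        mul_one] at hlt
      simp only [Set.mem_setOf_eq, ha1, one_mul] at hω
      linarith
    have hprod := hindep.measure_inter_preimage_eq_mul Finset.univ
      (sets := fun _ => ({1} : Set ℝ)) (fun i _ => measurableSet_singleton 1)
    have hpre : ∀ i, X i ⁻¹' ({1} : Set ℝ) = {ω | X i ω = 1} := fun i => rfl
    calc P {ω | (μ + ε) * n ≤ ∑ i, X i ω}
        ≤ P (⋂ i ∈ Finset.univ, X i ⁻¹' ({1} : Set ℝ)) := measure_mono hsub
      _ = ∏ i : Fin n, P (X i ⁻¹' ({1} : Set ℝ)) := hprod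
      _ = ENNReal.ofReal μ ^ n := by
          simp only [hpre, hber, Finset.prod_const, Finset.card_univ, Fintype.card_fin]
      _ = ENNReal.ofReal (Real.exp (-(n : ℝ) * klBer (μ + ε) μ)) := by
          have hkl : klBer (μ + ε) μ = -Real.log μ := by
            rw [klBer, ha1]
            simp [Real.log_div one_ne_zero (ne_of_gt hμ0)]
          rw [hkl, ← ENNReal.ofReal_pow hμ0.le]
          congr 1
          rw [show -(n:ℝ) * -Real.log μ = (n:ℝ) * Real.log μ by ring,
            Real.exp_nat_mul, Real.exp_log hμ0]
end
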